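/- Expansion of a hyperdeterminant along the first index: Let n ≥ 2 and k ≥ 1 be integers and let M be a hypermatrix of order 2k and dimension n. Then Det(M) = ∑_{0 ≤ i₂,…,i_{2k} ≤ n−1} (−1)^{i₂+⋯+i_{2k}} · M(0, i₂, …, i_{2k}) · Det(M̂), where M̂ is the hypermatrix of order 2k and dimension n−1 obtained from M by deleting the index value 0 from the first slot and the index value i_s from the s-th slot (s = 2,…,2k), each remaining index set enumerated in increasing order. -/

import Mathlib

open Nat

/-- The hyperdeterminant of a hypermatrix of order `m` and dimension `n`. -/
noncomputable def hypDet {m n : ℕ} (M : (Fin m → Fin n) → ℝ) : ℝ :=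
  (1 / (n ! : ℝ)) * ∑ σ : Fin m → Equiv.Perm (Fin n),
    (∏ s, ((Equiv.Perm.sign (σ s) : ℤ) : ℝ)) * ∏ i, M fun s => σ s i

/-- Decomposition of a permutation of `Fin (n+2)` as its value at `0` together with a
permutation of `Fin (n+1)`, compatible with `succAbove`. -/
noncomputable def permDecomp (n : ℕ) :
    Equiv.Perm (Fin (n + 2)) ≃ Fin (n + 2) × Equiv.Perm (Fin (n + 1)) where
  toFun σ := (σ 0, (Equiv.Perm.decomposeFin ((σ 0).cycleRange * σ)).2)
  invFun pe := (pe.1.cycleRange)⁻¹ * Equiv.Perm.decomposeFin.symm (0, pe.2)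
  left_inv σ := by
    have h0 : ((σ 0).cycleRange * σ) 0 = 0 := by
      simp [Equiv.Perm.mul_apply]
    have h1 : (Equiv.Perm.decomposeFin ((σ 0).cycleRange * σ)).1 = 0 := by
      have h2 := Equiv.Perm.decomposeFin_symm_apply_zero
        (Equiv.Perm.decomposeFin ((σ 0).cycleRange * σ)).1
        (Equiv.Perm.decomposeFin ((σ 0).cycleRange * σ)).2
      rw [Prod.mk.eta, Equiv.symm_apply_apply, h0] at h2
      exact h2.symm
    have h3 : ((0 : Fin (n + 2)), (Equiv.Perm.decomposeFin ((σ 0).cycleRange * σ)).2)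
        = Equiv.Perm.decomposeFin ((σ 0).cycleRange * σ) := Prod.ext h1.symm rfl
    show ((σ 0).cycleRange)⁻¹ * Equiv.Perm.decomposeFin.symm
        (0, (Equiv.Perm.decomposeFin ((σ 0).cycleRange * σ)).2) = σ
    rw [h3, Equiv.symm_apply_apply, inv_mul_cancel_left]
  right_inv pe := by
    obtain ⟨p, e⟩ := pe
    have h0 : ((p.cycleRange)⁻¹ * Equiv.Perm.decomposeFin.symm (0, e)) 0 = p := by
      simp only [Equiv.Perm.mul_apply, Equiv.Perm.decomposeFin_symm_apply_zero]
      rw [Equiv.Perm.inv_eq_iff_eq]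
      exact (Fin.cycleRange_self p).symm
    show ((((p.cycleRange)⁻¹ * Equiv.Perm.decomposeFin.symm (0, e)) 0),
        (Equiv.Perm.decomposeFin
          ((((p.cycleRange)⁻¹ * Equiv.Perm.decomposeFin.symm (0, e)) 0).cycleRange *
            ((p.cycleRange)⁻¹ * Equiv.Perm.decomposeFin.symm (0, e)))).2) = (p, e)
    rw [h0, mul_inv_cancel_left, Equiv.apply_symm_apply]

lemma permDecomp_symm_apply_zero (n : ℕ) (p : Fin (n + 2)) (e : Equiv.Perm (Fin (n + 1))) :
    (permDecomp n).symm (p, e) 0 = p := by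
  simp only [permDecomp, Equiv.coe_fn_symm_mk, Equiv.Perm.mul_apply,
    Equiv.Perm.decomposeFin_symm_apply_zero]
  rw [Equiv.Perm.inv_eq_iff_eq]
  exact (Fin.cycleRange_self p).symm

lemma permDecomp_symm_apply_succ (n : ℕ) (p : Fin (n + 2)) (e : Equiv.Perm (Fin (n + 1)))
    (t : Fin (n + 1)) : (permDecomp n).symm (p, e) t.succ = p.succAbove (e t) := by
  simp only [permDecomp, Equiv.coe_fn_symm_mk, Equiv.Perm.mul_apply,
    Equiv.Perm.decomposeFin_symm_apply_succ, Equiv.swap_self, Equiv.refl_apply]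
  rw [Equiv.Perm.inv_eq_iff_eq]
  exact (Fin.cycleRange_succAbove p (e t)).symm

lemma permDecomp_symm_sign (n : ℕ) (p : Fin (n + 2)) (e : Equiv.Perm (Fin (n + 1))) :
    ((Equiv.Perm.sign ((permDecomp n).symm (p, e)) : ℤ) : ℝ)
      = (-1 : ℝ) ^ (p : ℕ) * ((Equiv.Perm.sign e : ℤ) : ℝ) := by
  have hinv : ((-1 : ℤˣ) ^ (p : ℕ))⁻¹ = (-1 : ℤˣ) ^ (p : ℕ) :=
    inv_eq_of_mul_eq_one_left (by rw [← pow_add, ← two_mul, pow_mul, neg_one_sq, one_pow])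
  simp only [permDecomp, Equiv.coe_fn_symm_mk, map_mul, map_inv,
    Equiv.Perm.decomposeFin.symm_sign, Fin.sign_cycleRange, if_pos rfl, one_mul, hinv]
  push_cast
  ring

lemma permDecomp_symm_one (n : ℕ) : (permDecomp n).symm (0, 1) = 1 := by
  ext x
  refine Fin.cases ?_ (fun t => ?_) x
  · rw [permDecomp_symm_apply_zero]; rfl
  · rw [permDecomp_symm_apply_succ]
    simp [Fin.succAbove]

/-- Reduction of the hyperdeterminant (of even order) to a sum over tuples whose first
permutation is the identity. -/
lemma hypDet_eq_sum_fix (k N : ℕ) (hk : 1 ≤ k) (M : (Fin (2 * k) → Fin N) → ℝ) :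
    hypDet M = ∑ σ ∈ Finset.univ.filter
        (fun σ : Fin (2 * k) → Equiv.Perm (Fin N) => σ ⟨0, (by omega : 2 * k > 0)⟩ = 1),
      (∏ s, ((Equiv.Perm.sign (σ s) : ℤ) : ℝ)) * ∏ i, M fun s => σ s i := by
  have hz : 0 < 2 * k := by omega
  set z : Fin (2 * k) := ⟨0, hz⟩ with hzdef
  have key : ∀ (ρ : Fin (2 * k) → Equiv.Perm (Fin N)) (τ : Equiv.Perm (Fin N)),
      (∏ s, ((Equiv.Perm.sign (ρ s * τ) : ℤ) : ℝ)) * ∏ i, M (fun s => (ρ s * τ) i)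
      = (∏ s, ((Equiv.Perm.sign (ρ s) : ℤ) : ℝ)) * ∏ i, M (fun s => ρ s i) := by
    intro ρ τ
    have hsq : ((Equiv.Perm.sign τ : ℤ) : ℝ) ^ (2 * k) = 1 := by
      rw [pow_mul]
      have h2 : ((Equiv.Perm.sign τ : ℤ) : ℝ) ^ 2 = 1 := by
        rcases Int.units_eq_one_or (Equiv.Perm.sign τ) with h | h <;> rw [h] <;> norm_num
      rw [h2, one_pow]
    have hsign : (∏ s, ((Equiv.Perm.sign (ρ s * τ) : ℤ) : ℝ))
        = ∏ s, ((Equiv.Perm.sign (ρ s) : ℤ) : ℝ) := by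
      have h3 : ∀ s : Fin (2 * k), ((Equiv.Perm.sign (ρ s * τ) : ℤ) : ℝ)
          = ((Equiv.Perm.sign (ρ s) : ℤ) : ℝ) * ((Equiv.Perm.sign τ : ℤ) : ℝ) := by
        intro s; rw [map_mul]; push_cast; ring
      rw [Finset.prod_congr rfl fun s _ => h3 s, Finset.prod_mul_distrib,
        Finset.prod_const, Finset.card_univ, Fintype.card_fin, hsq, mul_one]
    have hprod : (∏ i, M (fun s => (ρ s * τ) i)) = ∏ i, M (fun s => ρ s i) :=
      Equiv.prod_comp τ (fun i => M fun s => ρ s i)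
    rw [hsign, hprod]
  have hsum : (∑ σ : Fin (2 * k) → Equiv.Perm (Fin N),
        (∏ s, ((Equiv.Perm.sign (σ s) : ℤ) : ℝ)) * ∏ i, M fun s => σ s i)
      = ∑ x ∈ (Finset.univ : Finset (Equiv.Perm (Fin N))) ×ˢ
          (Finset.univ.filter (fun ρ : Fin (2 * k) → Equiv.Perm (Fin N) => ρ z = 1)),
        (∏ s, ((Equiv.Perm.sign (x.2 s) : ℤ) : ℝ)) * ∏ i, M fun s => x.2 s i := by
    refine Finset.sum_nbij'
      (fun σ : Fin (2 * k) → Equiv.Perm (Fin N) => (σ z, fun s => σ s * (σ z)⁻¹))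
      (fun x : Equiv.Perm (Fin N) × (Fin (2 * k) → Equiv.Perm (Fin N)) => fun s => x.2 s * x.1)
      ?_ ?_ ?_ ?_ ?_
    · intro σ _
      simp [Finset.mem_product]
    · intro x _; exact Finset.mem_univ _
    · intro σ _
      funext s
      simp
    · intro x hx
      simp only [Finset.mem_product, Finset.mem_filter, Finset.mem_univ, true_and] at hx
      have h1 : x.2 z * x.1 = x.1 := by rw [hx, one_mul]
      refine Prod.ext ?_ ?_
      · exact h1
      · funext s
        show x.2 s * x.1 * (x.2 z * x.1)⁻¹ = x.2 s
        rw [h1, mul_inv_cancel_right]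
    · intro σ _
      have h := key (fun s => σ s * (σ z)⁻¹) (σ z)
      simp only [inv_mul_cancel_right] at h
      exact h
  rw [hypDet, hsum, Finset.sum_product]
  simp only []
  rw [Finset.sum_const, Finset.card_univ, Fintype.card_perm, Fintype.card_fin, nsmul_eq_mul,
    one_div, ← mul_assoc, inv_mul_cancel₀ (by exact_mod_cast (Nat.factorial_pos N).ne'), one_mul]

theorem hypDet_first_index_expansion (n k : ℕ) (hk : 1 ≤ k)
    (M : (Fin (2 * k) → Fin (n + 2)) → ℝ) :
    hypDet M =
      ∑ i ∈ Finset.univ.filter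
          (fun i : Fin (2 * k) → Fin (n + 2) => i ⟨0, by omega⟩ = 0),
        (-1 : ℝ) ^ (∑ s, (i s : ℕ)) * M i *
          hypDet (fun t : Fin (2 * k) → Fin (n + 1) =>
            M fun s => (i s).succAbove (t s)) := by
  have hz : 0 < 2 * k := by omega
  set z : Fin (2 * k) := ⟨0, hz⟩ with hzdef
  rw [hypDet_eq_sum_fix k (n + 2) hk M]
  have hone : permDecomp n 1 = (0, 1) := by
    rw [← permDecomp_symm_one n, Equiv.apply_symm_apply]
  have step2 : (∑ σ ∈ Finset.univ.filter
        (fun σ : Fin (2 * k) → Equiv.Perm (Fin (n + 2)) => σ z = 1),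
      (∏ s, ((Equiv.Perm.sign (σ s) : ℤ) : ℝ)) * ∏ i, M fun s => σ s i)
      = ∑ x ∈ (Finset.univ.filter (fun i : Fin (2 * k) → Fin (n + 2) => i z = 0)) ×ˢ
          (Finset.univ.filter (fun e : Fin (2 * k) → Equiv.Perm (Fin (n + 1)) => e z = 1)),
        (-1 : ℝ) ^ (∑ s, ((x.1 s : ℕ))) * M x.1 *
          ((∏ s, ((Equiv.Perm.sign (x.2 s) : ℤ) : ℝ)) *
            ∏ t, M fun s => (x.1 s).succAbove (x.2 s t)) := by
    refine (Finset.sum_nbij'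
      (fun x : (Fin (2 * k) → Fin (n + 2)) × (Fin (2 * k) → Equiv.Perm (Fin (n + 1))) =>
        fun s => (permDecomp n).symm (x.1 s, x.2 s))
      (fun σ : Fin (2 * k) → Equiv.Perm (Fin (n + 2)) =>
        (fun s => (permDecomp n (σ s)).1, fun s => (permDecomp n (σ s)).2))
      ?_ ?_ ?_ ?_ ?_).symm
    · intro x hx
      simp only [Finset.mem_product, Finset.mem_filter, Finset.mem_univ, true_and] at hx
      simp only [Finset.mem_filter, Finset.mem_univ, true_and]
      show (permDecomp n).symm (x.1 z, x.2 z) = 1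
      rw [hx.1, hx.2, permDecomp_symm_one]
    · intro σ hσ
      simp only [Finset.mem_filter, Finset.mem_univ, true_and] at hσ
      simp only [Finset.mem_product, Finset.mem_filter, Finset.mem_univ, true_and]
      constructor
      · show (permDecomp n (σ z)).1 = 0
        rw [hσ, hone]
      · show (permDecomp n (σ z)).2 = 1
        rw [hσ, hone]
    · intro x _
      have h : ∀ s, permDecomp n ((permDecomp n).symm (x.1 s, x.2 s)) = (x.1 s, x.2 s) :=
        fun s => Equiv.apply_symm_apply _ _
      refine Prod.ext (funext fun s => ?_) (funext fun s => ?_)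
      · show (permDecomp n ((permDecomp n).symm (x.1 s, x.2 s))).1 = x.1 s
        rw [h s]
      · show (permDecomp n ((permDecomp n).symm (x.1 s, x.2 s))).2 = x.2 s
        rw [h s]
    · intro σ _
      funext s
      show (permDecomp n).symm ((permDecomp n (σ s)).1, (permDecomp n (σ s)).2) = σ s
      rw [Prod.mk.eta, Equiv.symm_apply_apply]
    · intro x _
      have hsplit : (∏ i, M fun s => (permDecomp n).symm (x.1 s, x.2 s) i)
          = M x.1 * ∏ t, M fun s => (x.1 s).succAbove (x.2 s t) := by
        rw [Fin.prod_univ_succ]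
        congr 1
        · congr 1; funext s; rw [permDecomp_symm_apply_zero]
        · refine Finset.prod_congr rfl fun t _ => ?_
          congr 1; funext s; rw [permDecomp_symm_apply_succ]
      have hsign : (∏ s, ((Equiv.Perm.sign ((permDecomp n).symm (x.1 s, x.2 s)) : ℤ) : ℝ))
          = (-1 : ℝ) ^ (∑ s, ((x.1 s : ℕ))) * ∏ s, ((Equiv.Perm.sign (x.2 s) : ℤ) : ℝ) := by
        rw [Finset.prod_congr rfl fun s _ => permDecomp_symm_sign n (x.1 s) (x.2 s),
          Finset.prod_mul_distrib, Finset.prod_pow_eq_pow_sum]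
      simp only [hsign, hsplit]
      ring
  rw [step2, Finset.sum_product]
  refine Finset.sum_congr rfl fun i _ => ?_
  rw [hypDet_eq_sum_fix k (n + 1) hk
    (fun t : Fin (2 * k) → Fin (n + 1) => M fun s => (i s).succAbove (t s)), Finset.mul_sum]
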